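/- Let $f, g, h : (0,t] \to [0,\infty)$ be continuous with $f$ differentiable and $f'(s) + g(s) \le h(s)$ on $(0,t]$. Let $\psi : [0,t] \to [0,\infty)$ be nondecreasing, $b > -1$, and assume $\int_0^t s^b e^{-\psi(s)} f(s)\,ds < \infty$ and $s^{1+b} f(s) \to 0$ as $s \downarrow 0$. If moreover $f'(s) - \psi'(s) f(s) + g(s) \le h(s)$ with $\psi$ differentiable, then $t^{1+b} f(t) + \int_0^t s^{1+b} g(s)\,ds \le e^{\psi(t)}\Big( (1+b) \int_0^t s^b f(s)\,ds + \int_0^t s^{1+b} h(s)\,ds \Big)$. -/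

import Mathlib

open MeasureTheory Set Filter Topology

private lemma rpow_contOn (t p : ℝ) : ContinuousOn (fun s : ℝ => s ^ p) (Ioc 0 t) :=
  fun x hx => (Real.continuousAt_rpow_const x p (Or.inl hx.1.ne')).continuousWithinAt

/-- Core unweighted lemma: initial-behavior inequality (no integrating factor). -/
private lemma wib_core (t b : ℝ) (ht : 0 < t) (hb : -1 < b)
    (f g h f' : ℝ → ℝ)
    (hf_cont : ContinuousOn f (Ioc 0 t))
    (hg_cont : ContinuousOn g (Ioc 0 t))
    (hh_cont : ContinuousOn h (Ioc 0 t))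
    (hf_nonneg : ∀ s ∈ Ioc (0:ℝ) t, 0 ≤ f s)
    (hh_nonneg : ∀ s ∈ Ioc (0:ℝ) t, 0 ≤ h s)
    (hderiv : ∀ s ∈ Ioc (0:ℝ) t, HasDerivAt f (f' s) s)
    (hineq : ∀ s ∈ Ioc (0:ℝ) t, f' s + g s ≤ h s)
    (hint_f : IntegrableOn (fun s => s ^ b * f s) (Ioc 0 t))
    (hint_g : IntegrableOn (fun s => s ^ (1 + b) * g s) (Ioc 0 t))
    (hint_h : IntegrableOn (fun s => s ^ (1 + b) * h s) (Ioc 0 t))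
    (hlim : Tendsto (fun s => s ^ (1 + b) * f s) (nhdsWithin 0 (Ioi 0)) (nhds 0)) :
    t ^ (1 + b) * f t + ∫ s in Ioc 0 t, s ^ (1 + b) * g s
      ≤ (1 + b) * (∫ s in Ioc 0 t, s ^ b * f s) + ∫ s in Ioc 0 t, s ^ (1 + b) * h s := by
  set C := (1 + b) * (∫ s in Ioc 0 t, s ^ b * f s) + ∫ s in Ioc 0 t, s ^ (1 + b) * h s with hCdef
  have h1b : (0:ℝ) ≤ 1 + b := by linarith
  have step : ∀ ε ∈ Ioc (0:ℝ) t,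
      t ^ (1 + b) * f t - ε ^ (1 + b) * f ε + ∫ s in Ioc ε t, s ^ (1 + b) * g s ≤ C := by
    intro ε hε
    have hεt : ε ≤ t := hε.2
    have hsub : Icc ε t ⊆ Ioc 0 t := fun x hx => ⟨lt_of_lt_of_le hε.1 hx.1, hx.2⟩
    have hIoc : Ioc ε t ⊆ Ioc 0 t := Ioc_subset_Ioc_left hε.1.le
    have hpow1 := rpow_contOn t (1 + b)
    have hpowb := rpow_contOn t b
    set φ : ℝ → ℝ := fun s => (1 + b) * s ^ b * f s + s ^ (1 + b) * (h s - g s) with hφdef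
    have hφ_cont : ContinuousOn φ (Ioc 0 t) :=
      ((continuousOn_const.mul hpowb).mul hf_cont).add (hpow1.mul (hh_cont.sub hg_cont))
    have hφ_int : IntegrableOn φ (Icc ε t) := (hφ_cont.mono hsub).integrableOn_Icc
    have hF_cont : ContinuousOn (fun s => s ^ (1 + b) * f s) (Icc ε t) :=
      (hpow1.mul hf_cont).mono hsub
    have hder : ∀ x ∈ Ioo ε t, HasDerivWithinAt (fun s => s ^ (1 + b) * f s)
        ((1 + b) * x ^ b * f x + x ^ (1 + b) * f' x) (Ioi x) x := by
      intro x hx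
      have hx0 : (0:ℝ) < x := lt_trans hε.1 hx.1
      have hxm : x ∈ Ioc (0:ℝ) t := ⟨hx0, hx.2.le⟩
      have h1 : HasDerivAt (fun s : ℝ => s ^ (1 + b)) ((1 + b) * x ^ b) x := by
        have h2 := Real.hasDerivAt_rpow_const (x := x) (p := 1 + b) (Or.inl hx0.ne')
        rwa [show (1:ℝ) + b - 1 = b by ring] at h2
      exact (h1.mul (hderiv x hxm)).hasDerivWithinAt
    have hle : ∀ x ∈ Ioo ε t, (1 + b) * x ^ b * f x + x ^ (1 + b) * f' x ≤ φ x := by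
      intro x hx
      have hx0 : (0:ℝ) < x := lt_trans hε.1 hx.1
      have hxm : x ∈ Ioc (0:ℝ) t := ⟨hx0, hx.2.le⟩
      have h2 : f' x ≤ h x - g x := by linarith [hineq x hxm]
      have h3 : x ^ (1 + b) * f' x ≤ x ^ (1 + b) * (h x - g x) :=
        mul_le_mul_of_nonneg_left h2 (Real.rpow_nonneg hx0.le _)
      simp only [hφdef]; linarith
    have key := intervalIntegral.sub_le_integral_of_hasDeriv_right_of_le hεt hF_cont hder hφ_int hle
    rw [intervalIntegral.integral_of_le hεt] at key
    have hI : ∀ u : ℝ → ℝ, ContinuousOn u (Ioc 0 t) → IntegrableOn u (Ioc ε t) := fun u hu =>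
      ((hu.mono hsub).integrableOn_Icc).mono_set Ioc_subset_Icc_self
    have i1 : IntegrableOn (fun s => (1 + b) * s ^ b * f s) (Ioc ε t) :=
      hI _ ((continuousOn_const.mul hpowb).mul hf_cont)
    have i2 : IntegrableOn (fun s => s ^ (1 + b) * h s) (Ioc ε t) := hI _ (hpow1.mul hh_cont)
    have i3 : IntegrableOn (fun s => s ^ (1 + b) * g s) (Ioc ε t) := hI _ (hpow1.mul hg_cont)
    have i4 : IntegrableOn (fun s => s ^ (1 + b) * (h s - g s)) (Ioc ε t) :=
      hI _ (hpow1.mul (hh_cont.sub hg_cont))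
    have e1 : ∫ s in Ioc ε t, φ s
        = (∫ s in Ioc ε t, (1 + b) * s ^ b * f s)
          + ∫ s in Ioc ε t, s ^ (1 + b) * (h s - g s) := integral_add i1 i4
    have e1b : ∫ s in Ioc ε t, s ^ (1 + b) * (h s - g s)
        = (∫ s in Ioc ε t, s ^ (1 + b) * h s) - ∫ s in Ioc ε t, s ^ (1 + b) * g s := by
      simp only [mul_sub]
      exact integral_sub i2 i3
    have e2 : (∫ s in Ioc ε t, (1 + b) * s ^ b * f s)
        = (1 + b) * ∫ s in Ioc ε t, s ^ b * f s := by
      simp only [mul_assoc]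
      exact integral_const_mul _ _
    have hfm : (∫ s in Ioc ε t, s ^ b * f s) ≤ ∫ s in Ioc 0 t, s ^ b * f s := by
      apply setIntegral_mono_set hint_f
      · filter_upwards [ae_restrict_mem measurableSet_Ioc] with x hx
        exact mul_nonneg (Real.rpow_nonneg hx.1.le _) (hf_nonneg x hx)
      · exact hIoc.eventuallyLE
    have hhm : (∫ s in Ioc ε t, s ^ (1 + b) * h s) ≤ ∫ s in Ioc 0 t, s ^ (1 + b) * h s := by
      apply setIntegral_mono_set hint_h
      · filter_upwards [ae_restrict_mem measurableSet_Ioc] with x hx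
        exact mul_nonneg (Real.rpow_nonneg hx.1.le _) (hh_nonneg x hx)
      · exact hIoc.eventuallyLE
    have hfm' := mul_le_mul_of_nonneg_left hfm h1b
    rw [e1, e1b, e2] at key
    simp only [hCdef]
    linarith
  -- limit argument
  set u : ℕ → ℝ := fun n => t / (n + 1) with hudef
  have hu_pos : ∀ n, 0 < u n := fun n => div_pos ht (by positivity)
  have hu_le : ∀ n, u n ≤ t := fun n =>
    div_le_self ht.le (le_add_of_nonneg_left (Nat.cast_nonneg n))
  have hu_mem : ∀ n, u n ∈ Ioc (0:ℝ) t := fun n => ⟨hu_pos n, hu_le n⟩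
  have hu_anti : Antitone u := by
    intro m n hmn
    apply div_le_div_of_nonneg_left ht.le (by positivity)
    have : (m:ℝ) ≤ n := Nat.cast_le.mpr hmn
    linarith
  have hu_tend0 : Tendsto u atTop (𝓝 0) := by
    have h2 : Tendsto (fun n : ℕ => t * (1 / ((n:ℝ) + 1))) atTop (𝓝 (t * 0)) :=
      tendsto_one_div_add_atTop_nhds_zero_nat.const_mul t
    simpa [hudef, mul_one_div, div_eq_mul_inv] using h2
  have hu_tendIn : Tendsto u atTop (nhdsWithin 0 (Ioi 0)) :=
    tendsto_nhdsWithin_of_tendsto_nhds_of_eventually_within _ hu_tend0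
      (Eventually.of_forall fun n => hu_pos n)
  have hUnion : (⋃ n, Ioc (u n) t) = Ioc 0 t := by
    ext x
    simp only [mem_iUnion, mem_Ioc]
    constructor
    · rintro ⟨n, hn⟩; exact ⟨lt_trans (hu_pos n) hn.1, hn.2⟩
    · rintro ⟨hx0, hxt⟩
      obtain ⟨n, hn⟩ := ((tendsto_order.1 hu_tend0).2 x hx0).exists
      exact ⟨n, hn, hxt⟩
  have h_mono_sets : Monotone fun n => Ioc (u n) t := fun m n hmn =>
    Ioc_subset_Ioc_left (hu_anti hmn)
  have hGlim : Tendsto (fun n => ∫ s in Ioc (u n) t, s ^ (1 + b) * g s) atTop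
      (𝓝 (∫ s in Ioc 0 t, s ^ (1 + b) * g s)) := by
    have h2 := tendsto_setIntegral_of_monotone (fun n : ℕ => measurableSet_Ioc) h_mono_sets
      (hUnion ▸ hint_g)
    rwa [hUnion] at h2
  have hflim : Tendsto (fun n => (u n) ^ (1 + b) * f (u n)) atTop (𝓝 0) := hlim.comp hu_tendIn
  have hfinal : Tendsto (fun n => t ^ (1 + b) * f t - (u n) ^ (1 + b) * f (u n)
      + ∫ s in Ioc (u n) t, s ^ (1 + b) * g s) atTop
      (𝓝 (t ^ (1 + b) * f t - 0 + ∫ s in Ioc 0 t, s ^ (1 + b) * g s)) :=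
    (tendsto_const_nhds.sub hflim).add hGlim
  have hfin := le_of_tendsto hfinal (Eventually.of_forall fun n => step (u n) (hu_mem n))
  simpa using hfin

/-- Weighted initial-behavior inequality with integrating factor `e^{-ψ}`. -/
theorem weighted_initial_behavior
    (t b : ℝ) (ht : 0 < t) (hb : -1 < b)
    (f g h f' ψ ψ' : ℝ → ℝ)
    (hf_cont : ContinuousOn f (Ioc 0 t))
    (hg_cont : ContinuousOn g (Ioc 0 t))
    (hh_cont : ContinuousOn h (Ioc 0 t))
    (hf_nonneg : ∀ s ∈ Ioc (0:ℝ) t, 0 ≤ f s)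
    (hg_nonneg : ∀ s ∈ Ioc (0:ℝ) t, 0 ≤ g s)
    (hh_nonneg : ∀ s ∈ Ioc (0:ℝ) t, 0 ≤ h s)
    (hderiv : ∀ s ∈ Ioc (0:ℝ) t, HasDerivAt f (f' s) s)
    (hineq : ∀ s ∈ Ioc (0:ℝ) t, f' s + g s ≤ h s)
    (hψ_nonneg : ∀ s ∈ Icc (0:ℝ) t, 0 ≤ ψ s)
    (hψ_mono : MonotoneOn ψ (Icc 0 t))
    (hψ_deriv : ∀ s ∈ Ioc (0:ℝ) t, HasDerivAt ψ (ψ' s) s)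
    (hψ_cont : ContinuousOn ψ (Icc 0 t))
    (hint_f : IntegrableOn (fun s => s ^ b * Real.exp (-ψ s) * f s) (Ioc 0 t))
    (hint_h : IntegrableOn (fun s => s ^ (1 + b) * h s) (Ioc 0 t))
    (hlim : Tendsto (fun s => s ^ (1 + b) * f s) (nhdsWithin 0 (Ioi 0)) (nhds 0))
    (hineqψ : ∀ s ∈ Ioc (0:ℝ) t, f' s - ψ' s * f s + g s ≤ h s) :
    t ^ (1 + b) * f t + ∫ s in Ioc 0 t, s ^ (1 + b) * g s
      ≤ Real.exp (ψ t) *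
          ((1 + b) * (∫ s in Ioc 0 t, s ^ b * f s)
            + ∫ s in Ioc 0 t, s ^ (1 + b) * h s) := by
  have hιsub : Ioc (0:ℝ) t ⊆ Icc 0 t := Ioc_subset_Icc_self
  have h1b : (0:ℝ) ≤ 1 + b := by linarith
  have hpow1 := rpow_contOn t (1 + b)
  have hpowb := rpow_contOn t b
  have hE_cont : ContinuousOn (fun s => Real.exp (-ψ s)) (Ioc 0 t) :=
    Real.continuous_exp.comp_continuousOn (hψ_cont.mono hιsub).neg
  have hE_le_one : ∀ s ∈ Icc (0:ℝ) t, Real.exp (-ψ s) ≤ 1 := fun s hs =>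
    Real.exp_le_one_iff.mpr (neg_nonpos.mpr (hψ_nonneg s hs))
  have hone : ∀ s ∈ Icc (0:ℝ) t, 1 ≤ Real.exp (ψ t) * Real.exp (-ψ s) := by
    intro s hs
    have h0 : ψ s ≤ ψ t := hψ_mono hs ⟨ht.le, le_refl t⟩ hs.2
    calc (1:ℝ) = Real.exp 0 := Real.exp_zero.symm
      _ ≤ Real.exp (ψ t + -ψ s) := Real.exp_le_exp.2 (by linarith)
      _ = Real.exp (ψ t) * Real.exp (-ψ s) := Real.exp_add _ _
  -- tilde data
  have hft_cont : ContinuousOn (fun s => Real.exp (-ψ s) * f s) (Ioc 0 t) := hE_cont.mul hf_cont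
  have hht_cont : ContinuousOn (fun s => Real.exp (-ψ s) * h s) (Ioc 0 t) := hE_cont.mul hh_cont
  have hgt_cont : ContinuousOn (fun s => Real.exp (-ψ s) * g s) (Ioc 0 t) := hE_cont.mul hg_cont
  have hft_nonneg : ∀ s ∈ Ioc (0:ℝ) t, 0 ≤ Real.exp (-ψ s) * f s := fun s hs =>
    mul_nonneg (Real.exp_pos _).le (hf_nonneg s hs)
  have hht_nonneg : ∀ s ∈ Ioc (0:ℝ) t, 0 ≤ Real.exp (-ψ s) * h s := fun s hs =>
    mul_nonneg (Real.exp_pos _).le (hh_nonneg s hs)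
  have hft_deriv : ∀ s ∈ Ioc (0:ℝ) t, HasDerivAt (fun s => Real.exp (-ψ s) * f s)
      (Real.exp (-ψ s) * (f' s - ψ' s * f s)) s := by
    intro s hs
    have h1 : HasDerivAt (fun s => Real.exp (-ψ s)) (Real.exp (-ψ s) * -ψ' s) s :=
      ((hψ_deriv s hs).neg).exp
    have h2 : HasDerivAt (fun s => Real.exp (-ψ s) * f s)
        (Real.exp (-ψ s) * -ψ' s * f s + Real.exp (-ψ s) * f' s) s := h1.mul (hderiv s hs)
    convert h2 using 1
    ring
  have hint_ft : IntegrableOn (fun s => s ^ b * (Real.exp (-ψ s) * f s)) (Ioc 0 t) := by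
    have : (fun s => s ^ b * (Real.exp (-ψ s) * f s))
        = fun s => s ^ b * Real.exp (-ψ s) * f s := by funext s; ring
    rw [this]; exact hint_f
  have hint_ht : IntegrableOn (fun s => s ^ (1 + b) * (Real.exp (-ψ s) * h s)) (Ioc 0 t) := by
    apply Integrable.mono hint_h
      (((hpow1.mul hht_cont)).aestronglyMeasurable measurableSet_Ioc)
    filter_upwards [ae_restrict_mem measurableSet_Ioc] with x hx
    rw [Real.norm_eq_abs, Real.norm_eq_abs, Pi.mul_apply, abs_mul, abs_mul, abs_mul]
    have h1 : |Real.exp (-ψ x)| ≤ 1 := by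
      rw [abs_of_pos (Real.exp_pos _)]; exact hE_le_one x (hιsub hx)
    nlinarith [mul_nonneg (abs_nonneg (x ^ (1 + b))) (abs_nonneg (h x)),
      mul_nonneg (mul_nonneg (abs_nonneg (x ^ (1 + b))) (abs_nonneg (h x)))
        (sub_nonneg.mpr h1)]
  have hlim_t : Tendsto (fun s => s ^ (1 + b) * (Real.exp (-ψ s) * f s))
      (nhdsWithin 0 (Ioi 0)) (nhds 0) := by
    have hmem : Ioo (0:ℝ) t ∈ nhdsWithin (0:ℝ) (Ioi 0) :=
      Ioo_mem_nhdsGT_of_mem ⟨le_refl 0, ht⟩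
    apply tendsto_of_tendsto_of_tendsto_of_le_of_le' tendsto_const_nhds hlim
    · filter_upwards [hmem] with x hx
      exact mul_nonneg (Real.rpow_nonneg hx.1.le _)
        (mul_nonneg (Real.exp_pos _).le (hf_nonneg x ⟨hx.1, hx.2.le⟩))
    · filter_upwards [hmem] with x hx
      have h2 : Real.exp (-ψ x) * f x ≤ f x :=
        mul_le_of_le_one_left (hf_nonneg x ⟨hx.1, hx.2.le⟩) (hE_le_one x ⟨hx.1.le, hx.2.le⟩)
      exact mul_le_mul_of_nonneg_left h2 (Real.rpow_nonneg hx.1.le _)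
  -- bounds on the right-hand integrals
  have hint_fb : IntegrableOn (fun s => s ^ b * f s) (Ioc 0 t) := by
    apply Integrable.mono (hint_ft.const_mul (Real.exp (ψ t)))
      ((hpowb.mul hf_cont).aestronglyMeasurable measurableSet_Ioc)
    filter_upwards [ae_restrict_mem measurableSet_Ioc] with x hx
    rw [Real.norm_eq_abs, Real.norm_eq_abs]
    have h1 := hone x (hιsub hx)
    have h2 := hf_nonneg x hx
    have h3 := Real.rpow_nonneg hx.1.le b
    have h4 : (0:ℝ) ≤ x ^ b * f x := mul_nonneg h3 h2
    rw [Pi.mul_apply, abs_of_nonneg h4]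
    have h5 : x ^ b * f x ≤ Real.exp (ψ t) * (x ^ b * (Real.exp (-ψ x) * f x)) := by
      nlinarith [mul_nonneg (mul_nonneg h3 h2) (sub_nonneg.mpr h1)]
    exact h5.trans (le_abs_self _)
  have hBle : (∫ s in Ioc 0 t, s ^ b * (Real.exp (-ψ s) * f s))
      ≤ ∫ s in Ioc 0 t, s ^ b * f s := by
    apply setIntegral_mono_on hint_ft hint_fb measurableSet_Ioc
    intro x hx
    have h2 := hE_le_one x (hιsub hx)
    have h3 := hf_nonneg x hx
    have h4 := Real.rpow_nonneg hx.1.le b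
    exact mul_le_mul_of_nonneg_left (mul_le_of_le_one_left h3 h2) h4
  have hDle : (∫ s in Ioc 0 t, s ^ (1 + b) * (Real.exp (-ψ s) * h s))
      ≤ ∫ s in Ioc 0 t, s ^ (1 + b) * h s := by
    apply setIntegral_mono_on hint_ht hint_h measurableSet_Ioc
    intro x hx
    have h2 := hE_le_one x (hιsub hx)
    have h3 := hh_nonneg x hx
    have h4 := Real.rpow_nonneg hx.1.le (1 + b)
    exact mul_le_mul_of_nonneg_left (mul_le_of_le_one_left h3 h2) h4
  have e0 : t ^ (1 + b) * f t
      = Real.exp (ψ t) * (t ^ (1 + b) * (Real.exp (-ψ t) * f t)) := by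
    rw [Real.exp_neg]
    field_simp
  by_cases hg_int : IntegrableOn (fun s => s ^ (1 + b) * g s) (Ioc 0 t)
  · -- integrable case
    have hint_gt : IntegrableOn (fun s => s ^ (1 + b) * (Real.exp (-ψ s) * g s)) (Ioc 0 t) := by
      apply Integrable.mono hg_int
        ((hpow1.mul hgt_cont).aestronglyMeasurable measurableSet_Ioc)
      filter_upwards [ae_restrict_mem measurableSet_Ioc] with x hx
      rw [Real.norm_eq_abs, Real.norm_eq_abs, Pi.mul_apply, abs_mul, abs_mul, abs_mul]
      have h1 : |Real.exp (-ψ x)| ≤ 1 := by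
        rw [abs_of_pos (Real.exp_pos _)]; exact hE_le_one x (hιsub hx)
      nlinarith [mul_nonneg (abs_nonneg (x ^ (1 + b))) (abs_nonneg (g x)),
        mul_nonneg (mul_nonneg (abs_nonneg (x ^ (1 + b))) (abs_nonneg (g x)))
          (sub_nonneg.mpr h1)]
    have key := wib_core t b ht hb (fun s => Real.exp (-ψ s) * f s)
      (fun s => Real.exp (-ψ s) * g s) (fun s => Real.exp (-ψ s) * h s)
      (fun s => Real.exp (-ψ s) * (f' s - ψ' s * f s))
      hft_cont hgt_cont hht_cont hft_nonneg hht_nonneg hft_deriv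
      (fun s hs => by
        nlinarith [mul_nonneg (Real.exp_pos (-ψ s)).le (sub_nonneg.mpr (hineqψ s hs))])
      hint_ft hint_gt hint_ht hlim_t
    have hgA : (∫ s in Ioc 0 t, s ^ (1 + b) * g s)
        ≤ Real.exp (ψ t) * ∫ s in Ioc 0 t, s ^ (1 + b) * (Real.exp (-ψ s) * g s) := by
      rw [← integral_const_mul]
      apply setIntegral_mono_on hg_int (hint_gt.const_mul _) measurableSet_Ioc
      intro x hx
      have h1 := hone x (hιsub hx)
      have hgx := hg_nonneg x hx
      have hxp := Real.rpow_nonneg hx.1.le (1 + b)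
      nlinarith [mul_nonneg (mul_nonneg hxp hgx) (sub_nonneg.mpr h1)]
    calc t ^ (1 + b) * f t + ∫ s in Ioc 0 t, s ^ (1 + b) * g s
        ≤ Real.exp (ψ t) * (t ^ (1 + b) * (Real.exp (-ψ t) * f t))
          + Real.exp (ψ t) * ∫ s in Ioc 0 t, s ^ (1 + b) * (Real.exp (-ψ s) * g s) := by
          rw [← e0]; linarith
      _ = Real.exp (ψ t) * (t ^ (1 + b) * (Real.exp (-ψ t) * f t)
          + ∫ s in Ioc 0 t, s ^ (1 + b) * (Real.exp (-ψ s) * g s)) := by ring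
      _ ≤ Real.exp (ψ t) * ((1 + b) * (∫ s in Ioc 0 t, s ^ b * (Real.exp (-ψ s) * f s))
          + ∫ s in Ioc 0 t, s ^ (1 + b) * (Real.exp (-ψ s) * h s)) :=
          mul_le_mul_of_nonneg_left key (Real.exp_nonneg _)
      _ ≤ Real.exp (ψ t) * ((1 + b) * (∫ s in Ioc 0 t, s ^ b * f s)
          + ∫ s in Ioc 0 t, s ^ (1 + b) * h s) := by
          apply mul_le_mul_of_nonneg_left _ (Real.exp_nonneg _)
          exact add_le_add (mul_le_mul_of_nonneg_left hBle h1b) hDle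
  · -- non-integrable case: the integral of g is zero
    rw [integral_undef hg_int]
    have key := wib_core t b ht hb (fun s => Real.exp (-ψ s) * f s)
      (fun _ => (0:ℝ)) (fun s => Real.exp (-ψ s) * h s)
      (fun s => Real.exp (-ψ s) * (f' s - ψ' s * f s))
      hft_cont continuousOn_const hht_cont hft_nonneg hht_nonneg hft_deriv
      (fun s hs => by
        nlinarith [mul_nonneg (Real.exp_pos (-ψ s)).le (sub_nonneg.mpr (hineqψ s hs)),
          mul_nonneg (Real.exp_pos (-ψ s)).le (hg_nonneg s hs)])
      hint_ft (by simp)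
      hint_ht hlim_t
    simp only [mul_zero, integral_zero, add_zero] at key
    calc t ^ (1 + b) * f t + 0
        = Real.exp (ψ t) * (t ^ (1 + b) * (Real.exp (-ψ t) * f t)) := by rw [← e0]; ring
      _ ≤ Real.exp (ψ t) * ((1 + b) * (∫ s in Ioc 0 t, s ^ b * (Real.exp (-ψ s) * f s))
          + ∫ s in Ioc 0 t, s ^ (1 + b) * (Real.exp (-ψ s) * h s)) :=
          mul_le_mul_of_nonneg_left key (Real.exp_nonneg _)
      _ ≤ Real.exp (ψ t) * ((1 + b) * (∫ s in Ioc 0 t, s ^ b * f s)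
          + ∫ s in Ioc 0 t, s ^ (1 + b) * h s) := by
          apply mul_le_mul_of_nonneg_left _ (Real.exp_nonneg _)
          exact add_le_add (mul_le_mul_of_nonneg_left hBle h1b) hDle
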